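/- Let the time-delay switched linear system ẋ(t) = A⁰_{σ(t)} x(t) + ∫_{[−h,0]} d[ν_{σ(t)}(θ)] x(t+θ), σ ∈ Σ₊, be exponentially stable under arbitrary switching, and assume the set G = { ξ ∈ ℝⁿ : ξ ≫ 0 and (M(A⁰_k) + V(ν_k)) ξ ≪ 0 for all k = 1,…,N } is nonempty. Subject the data to structured affine perturbations A⁰_k → A⁰_k + D⁰_k Δ_k E⁰_k and ν_k → ν_k + D¹_k δ_k E¹_k. Then the structured stability radius satisfies the lower bound r_ℝ(A,Γ,D,E) ≥ (1/M₀) · sup_{ξ ∈ G} β(ξ)/‖ξ‖, where for ξ ∈ G, β(ξ) = min over k = 1,…,N and i = 1,…,n of the i-th component of −(M(A⁰_k) + V(ν_k)) ξ, and M₀ = max_{k} max{ ‖D⁰_k‖ ‖E⁰_k‖, ‖D¹_k‖ ‖E¹_k‖ }. Equivalently, for every perturbation with ‖Δ‖_max < (1/M₀) β(ξ)/‖ξ‖ for some ξ ∈ G, the perturbed switched system is exponentially stable under arbitrary switching. -/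

import Mathlib

open MeasureTheory Set Filter Matrix
open scoped ENNReal

noncomputable section

/-- Integral of a real function against a finite signed Borel measure. -/
def sint {α : Type*} [MeasurableSpace α] (s : MeasureTheory.SignedMeasure α) (f : α → ℝ) : ℝ :=
  (∫ a, f a ∂s.toJordanDecomposition.posPart) - ∫ a, f a ∂s.toJordanDecomposition.negPart

/-- Total variation of a finite signed measure, evaluated on the whole space. -/
def tvar {α : Type*} [MeasurableSpace α] (s : MeasureTheory.SignedMeasure α) : ℝ :=
  (s.totalVariation Set.univ).toReal

/-- Row-sum matrix norm (the operator norm induced by the `∞`-norm). -/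
def matNorm {p q : ℕ} (A : Matrix (Fin p) (Fin q) ℝ) : ℝ :=
  ⨆ i, ∑ j, |A i j|

/-- The Metzler matrix `M(A)` associated with `A`. -/
def metz {n : ℕ} (A : Matrix (Fin n) (Fin n) ℝ) : Matrix (Fin n) (Fin n) ℝ :=
  Matrix.of fun i j => if i = j then A i j else |A i j|

/-- The matrix `V(ν)` of total variations of a matrix of signed measures. -/
def Vmat {h : ℝ} {p q : ℕ}
    (ν : Fin p → Fin q → MeasureTheory.SignedMeasure (Set.Icc (-h) (0:ℝ))) :
    Matrix (Fin p) (Fin q) ℝ :=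
  Matrix.of fun i j => tvar (ν i j)

/-- The norm `‖ν‖ = max_i Σ_j |ν_{ij}|([-h,0])` of a matrix of signed measures. -/
def mnorm {h : ℝ} {p q : ℕ}
    (ν : Fin p → Fin q → MeasureTheory.SignedMeasure (Set.Icc (-h) (0:ℝ))) : ℝ :=
  ⨆ i, ∑ j, tvar (ν i j)

/-- A switching signal: piecewise constant, right continuous, with strictly
positive dwell time (and normalized to be constant on `(-∞, 0]`). -/
def IsSwitchingSignal {N : ℕ} (σ : ℝ → Fin N) : Prop :=
  (∀ t ≤ (0:ℝ), σ t = σ 0) ∧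
  ∃ d : ℝ, 0 < d ∧ ∃ τ : ℕ → ℝ, τ 0 = 0 ∧ (∀ k, τ k + d ≤ τ (k + 1)) ∧
    ∀ k : ℕ, ∀ t ∈ Set.Ico (τ k) (τ (k + 1)), σ t = σ (τ k)

/-- `x` is a solution of the switched delay system `ẋ(t) = A⁰_{σ(t)} x(t) +
∫_{[-h,0]} d[ν_{σ(t)}(θ)] x(t+θ)` with switching signal `σ` and initial function `φ`. -/
def IsSolution (h : ℝ) {N n : ℕ} (σ : ℝ → Fin N)
    (A : Fin N → Matrix (Fin n) (Fin n) ℝ)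
    (ν : Fin N → Fin n → Fin n → MeasureTheory.SignedMeasure (Set.Icc (-h) (0:ℝ)))
    (φ : C(Set.Icc (-h) (0:ℝ), Fin n → ℝ)) (x : ℝ → Fin n → ℝ) : Prop :=
  ContinuousOn x (Set.Ici (-h)) ∧
  (∀ θ : Set.Icc (-h) (0:ℝ), x (θ : ℝ) = φ θ) ∧
  ∀ t : ℝ, 0 ≤ t → (∀ᶠ s in nhds t, σ s = σ t) → ∀ i,
    HasDerivWithinAt (fun s => x s i)
      ((∑ j, A (σ t) i j * x t j) +
        ∑ j, sint (ν (σ t) i j) fun θ => x (t + (θ : ℝ)) j)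
      (Set.Ici t) t

/-- Exponential stability of the switched system under arbitrary switching. -/
def ExpStableSw (h : ℝ) {N n : ℕ}
    (A : Fin N → Matrix (Fin n) (Fin n) ℝ)
    (ν : Fin N → Fin n → Fin n → MeasureTheory.SignedMeasure (Set.Icc (-h) (0:ℝ))) : Prop :=
  ∃ M > (0:ℝ), ∃ α > (0:ℝ), ∀ σ : ℝ → Fin N, IsSwitchingSignal σ →
    ∀ φ x, IsSolution h σ A ν φ x →
      ∀ t ≥ (0:ℝ), ‖x t‖ ≤ M * Real.exp (-α * t) * ‖φ‖

/-- `x` is a solution of the (non-switched) delay system `(A, ν)` with initial function `φ`. -/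
def IsSolution1 (h : ℝ) {n : ℕ} (A : Matrix (Fin n) (Fin n) ℝ)
    (ν : Fin n → Fin n → MeasureTheory.SignedMeasure (Set.Icc (-h) (0:ℝ)))
    (φ : C(Set.Icc (-h) (0:ℝ), Fin n → ℝ)) (x : ℝ → Fin n → ℝ) : Prop :=
  ContinuousOn x (Set.Ici (-h)) ∧
  (∀ θ : Set.Icc (-h) (0:ℝ), x (θ : ℝ) = φ θ) ∧
  ∀ t : ℝ, 0 ≤ t → ∀ i,
    HasDerivWithinAt (fun s => x s i)
      ((∑ j, A i j * x t j) + ∑ j, sint (ν i j) fun θ => x (t + (θ : ℝ)) j)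
      (Set.Ici t) t

/-- Exponential stability of a single (non-switched) delay system. -/
def ExpStable1 (h : ℝ) {n : ℕ} (A : Matrix (Fin n) (Fin n) ℝ)
    (ν : Fin n → Fin n → MeasureTheory.SignedMeasure (Set.Icc (-h) (0:ℝ))) : Prop :=
  ∃ M > (0:ℝ), ∃ α > (0:ℝ), ∀ φ x, IsSolution1 h A ν φ x →
    ∀ t ≥ (0:ℝ), ‖x t‖ ≤ M * Real.exp (-α * t) * ‖φ‖

/-- The perturbed kernel `ν + D¹ δ E¹`, with entries
`Σ_a Σ_b (D¹)_{ia} δ_{ab} (E¹)_{bj}` added to `ν_{ij}`. -/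
def pertKernel {h : ℝ} {n s p : ℕ}
    (ν : Fin n → Fin n → MeasureTheory.SignedMeasure (Set.Icc (-h) (0:ℝ)))
    (D1 : Matrix (Fin n) (Fin s) ℝ)
    (δ : Fin s → Fin p → MeasureTheory.SignedMeasure (Set.Icc (-h) (0:ℝ)))
    (E1 : Matrix (Fin p) (Fin n) ℝ) :
    Fin n → Fin n → MeasureTheory.SignedMeasure (Set.Icc (-h) (0:ℝ)) :=
  fun i j => ν i j + ∑ a, ∑ b, (D1 i a * E1 b j) • δ a b


section helpers
variable {α : Type*} [MeasurableSpace α]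

lemma tvar_nonneg (s : SignedMeasure α) : 0 ≤ tvar s := ENNReal.toReal_nonneg

lemma tvar_eq (s : SignedMeasure α) :
    tvar s = (s.toJordanDecomposition.posPart univ).toReal
      + (s.toJordanDecomposition.negPart univ).toReal := by
  haveI := s.toJordanDecomposition.posPart_finite
  haveI := s.toJordanDecomposition.negPart_finite
  simp [tvar, SignedMeasure.totalVariation, Measure.add_apply,
    ENNReal.toReal_add (measure_ne_top _ _) (measure_ne_top _ _)]

lemma signed_apply (s : SignedMeasure α) {E : Set α} (hE : MeasurableSet E) :
    s E = (s.toJordanDecomposition.posPart E).toReal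
      - (s.toJordanDecomposition.negPart E).toReal := by
  haveI := s.toJordanDecomposition.posPart_finite
  haveI := s.toJordanDecomposition.negPart_finite
  conv_lhs => rw [← s.toSignedMeasure_toJordanDecomposition]
  rw [JordanDecomposition.toSignedMeasure]
  simp [VectorMeasure.sub_apply, Measure.toSignedMeasure_apply_measurable hE, hE]
  rfl

lemma abs_apply_pair_le (s : SignedMeasure α) {u : Set α} (hu : MeasurableSet u) :
    |s uᶜ| + |s u| ≤ tvar s := by
  haveI := s.toJordanDecomposition.posPart_finite
  haveI := s.toJordanDecomposition.negPart_finite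
  set p := s.toJordanDecomposition.posPart
  set n := s.toJordanDecomposition.negPart
  have h1 : s u = (p u).toReal - (n u).toReal := signed_apply s hu
  have h2 : s uᶜ = (p uᶜ).toReal - (n uᶜ).toReal := signed_apply s hu.compl
  have hp : (p u).toReal + (p uᶜ).toReal = (p univ).toReal := by
    rw [← ENNReal.toReal_add (measure_ne_top _ _) (measure_ne_top _ _),
      measure_add_measure_compl hu]
  have hn : (n u).toReal + (n uᶜ).toReal = (n univ).toReal := by
    rw [← ENNReal.toReal_add (measure_ne_top _ _) (measure_ne_top _ _),
      measure_add_measure_compl hu]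
  rw [tvar_eq]
  have := abs_sub (( p uᶜ).toReal) ((n uᶜ).toReal)
  have h3 : |s uᶜ| ≤ (p uᶜ).toReal + (n uᶜ).toReal := by
    rw [h2]; exact (abs_sub _ _).trans (by simp [abs_of_nonneg ENNReal.toReal_nonneg])
  have h4 : |s u| ≤ (p u).toReal + (n u).toReal := by
    rw [h1]; exact (abs_sub _ _).trans (by simp [abs_of_nonneg ENNReal.toReal_nonneg])
  linarith

lemma tvar_eq_pair (s : SignedMeasure α) :
    ∃ u : Set α, MeasurableSet u ∧ tvar s = s uᶜ - s u := by
  haveI := s.toJordanDecomposition.posPart_finite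
  haveI := s.toJordanDecomposition.negPart_finite
  obtain ⟨u, hu, hpu, hnu⟩ := s.toJordanDecomposition.mutuallySingular
  refine ⟨u, hu, ?_⟩
  rw [tvar_eq, signed_apply s hu, signed_apply s hu.compl]
  set p := s.toJordanDecomposition.posPart
  set n := s.toJordanDecomposition.negPart
  have hp : (p univ).toReal = (p uᶜ).toReal := by
    rw [← measure_add_measure_compl hu (μ := p), hpu, zero_add]
  have hn : (n univ).toReal = (n u).toReal := by
    rw [← measure_add_measure_compl hu (μ := n), hnu, add_zero]
  rw [hp, hn, hpu, hnu]
  simp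

lemma tvar_add_le (s t : SignedMeasure α) : tvar (s + t) ≤ tvar s + tvar t := by
  obtain ⟨u, hu, heq⟩ := tvar_eq_pair (s + t)
  rw [heq]
  have h1 : (s + t) uᶜ = s uᶜ + t uᶜ := by simp [VectorMeasure.add_apply]
  have h2 : (s + t) u = s u + t u := by simp [VectorMeasure.add_apply]
  have h3 := abs_apply_pair_le s hu
  have h4 := abs_apply_pair_le t hu
  have := abs_le.1 (le_refl |s uᶜ|)
  rw [h1, h2]
  have a1 : s uᶜ ≤ |s uᶜ| := le_abs_self _
  have a2 : -(s u) ≤ |s u| := neg_le_abs _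
  have a3 : t uᶜ ≤ |t uᶜ| := le_abs_self _
  have a4 : -(t u) ≤ |t u| := neg_le_abs _
  linarith

lemma tvar_smul_le (c : ℝ) (s : SignedMeasure α) : tvar (c • s) ≤ |c| * tvar s := by
  obtain ⟨u, hu, heq⟩ := tvar_eq_pair (c • s)
  rw [heq]
  have h1 : (c • s) uᶜ = c * s uᶜ := by simp [VectorMeasure.smul_apply, smul_eq_mul]
  have h2 : (c • s) u = c * s u := by simp [VectorMeasure.smul_apply, smul_eq_mul]
  have h3 := abs_apply_pair_le s hu
  rw [h1, h2]
  calc c * s uᶜ - c * s u ≤ |c * s uᶜ - c * s u| := le_abs_self _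
    _ = |c| * |s uᶜ - s u| := by rw [← mul_sub, abs_mul]
    _ ≤ |c| * (|s uᶜ| + |s u|) := by
        exact mul_le_mul_of_nonneg_left (abs_sub _ _) (abs_nonneg c)
    _ ≤ |c| * tvar s := mul_le_mul_of_nonneg_left h3 (abs_nonneg c)

lemma tvar_sum_le {ι : Type*} (f : ι → SignedMeasure α) (s : Finset ι) :
    tvar (∑ i ∈ s, f i) ≤ ∑ i ∈ s, tvar (f i) := by
  classical
  induction s using Finset.cons_induction with
  | empty =>
      have : tvar (0 : SignedMeasure α) = 0 := by
        obtain ⟨u, hu, heq⟩ := tvar_eq_pair (0 : SignedMeasure α)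
        rw [heq]; simp
      simp [this]
  | cons a s ha ih =>
    rw [Finset.sum_cons, Finset.sum_cons]
    exact (tvar_add_le _ _).trans (by linarith)

lemma abs_sint_le (s : SignedMeasure α) (f : α → ℝ) (C : ℝ) (hf : ∀ a, |f a| ≤ C) :
    |sint s f| ≤ C * tvar s := by
  haveI := s.toJordanDecomposition.posPart_finite
  haveI := s.toJordanDecomposition.negPart_finite
  have h1 : ‖∫ a, f a ∂s.toJordanDecomposition.posPart‖ ≤
      C * (s.toJordanDecomposition.posPart univ).toReal := by
    apply norm_integral_le_of_norm_le_const
    · filter_upwards with a using by rw [Real.norm_eq_abs]; exact hf a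
  have h2 : ‖∫ a, f a ∂s.toJordanDecomposition.negPart‖ ≤
      C * (s.toJordanDecomposition.negPart univ).toReal := by
    apply norm_integral_le_of_norm_le_const
    · filter_upwards with a using by rw [Real.norm_eq_abs]; exact hf a
  rw [Real.norm_eq_abs] at h1 h2
  rw [tvar_eq]
  calc |sint s f| ≤ |∫ a, f a ∂s.toJordanDecomposition.posPart| +
      |∫ a, f a ∂s.toJordanDecomposition.negPart| := abs_sub _ _
    _ ≤ _ := by
        have hma := mul_add C (s.toJordanDecomposition.posPart univ).toReal
          (s.toJordanDecomposition.negPart univ).toReal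
        linarith

lemma matNorm_nonneg {p q : ℕ} (A : Matrix (Fin p) (Fin q) ℝ) : 0 ≤ matNorm A :=
  Real.iSup_nonneg fun i => Finset.sum_nonneg fun j _ => abs_nonneg _

lemma rowsum_le_matNorm {p q : ℕ} (A : Matrix (Fin p) (Fin q) ℝ) (i : Fin p) :
    ∑ j, |A i j| ≤ matNorm A :=
  le_ciSup (f := fun i => ∑ j, |A i j|) (Set.Finite.bddAbove (Set.finite_range _)) i

lemma matNorm_mul_le {a b c : ℕ} (X : Matrix (Fin a) (Fin b) ℝ) (Y : Matrix (Fin b) (Fin c) ℝ) :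
    matNorm (X * Y) ≤ matNorm X * matNorm Y := by
  rcases isEmpty_or_nonempty (Fin a) with he | hne
  · have : matNorm (X * Y) = 0 := by
      simp [matNorm, ciSup_of_empty]
    rw [this]
    exact mul_nonneg (matNorm_nonneg X) (matNorm_nonneg Y)
  · apply ciSup_le
    intro i
    calc ∑ j, |(X * Y) i j| ≤ ∑ j, ∑ k, |X i k| * |Y k j| := by
          apply Finset.sum_le_sum
          intro j _
          rw [Matrix.mul_apply]
          exact (Finset.abs_sum_le_sum_abs _ _).trans
            (le_of_eq (Finset.sum_congr rfl fun k _ => abs_mul _ _))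
      _ = ∑ k, |X i k| * ∑ j, |Y k j| := by
          rw [Finset.sum_comm]
          exact Finset.sum_congr rfl fun k _ => (Finset.mul_sum _ _ _).symm
      _ ≤ ∑ k, |X i k| * matNorm Y := by
          apply Finset.sum_le_sum
          intro k _
          exact mul_le_mul_of_nonneg_left (rowsum_le_matNorm Y k) (abs_nonneg _)
      _ = (∑ k, |X i k|) * matNorm Y := by rw [Finset.sum_mul]
      _ ≤ matNorm X * matNorm Y :=
          mul_le_mul_of_nonneg_right (rowsum_le_matNorm X i) (matNorm_nonneg Y)

lemma eventually_neg_of_derivWithin_neg {f : ℝ → ℝ} {a d : ℝ}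
    (hf : HasDerivWithinAt f d (Set.Ici a) a) (hd : d < 0) (hfa : f a = 0) :
    ∀ᶠ u in nhdsWithin a (Set.Ioi a), f u < 0 := by
  have hslope : Tendsto (slope f a) (nhdsWithin a (Set.Ici a \ {a})) (nhds d) :=
    hasDerivWithinAt_iff_tendsto_slope.1 hf
  have hset : Set.Ici a \ {a} = Set.Ioi a := Set.Ici_sdiff_left
  rw [hset] at hslope
  have hev : ∀ᶠ u in nhdsWithin a (Set.Ioi a), slope f a u < 0 :=
    hslope.eventually (tendsto_id.eventually_lt_const hd |>.mono fun _ h => h)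
  filter_upwards [hev, self_mem_nhdsWithin] with u hu hmem
  have hua : 0 < u - a := sub_pos.2 hmem
  have hu' : (f u - f a) / (u - a) < 0 := by rwa [slope_def_field] at hu
  rw [hfa, sub_zero] at hu'
  exact (div_neg_iff.1 hu').elim (fun h => absurd hua (not_lt.2 h.2.le)) fun h => h.1

end helpers

section numeric

private lemma numeric1 (sgD A1 A2 L η' c β α ξi eah e0 : ℝ)
    (hsgD : sgD ≤ 2*c*A1*e0 + L*η'*e0 + 2*c*A2*(eah*e0))
    (hA12 : A1 + A2 ≤ -β) (hkey2 : A2*(eah-1) ≤ β/4) (hkey3 : L*η' ≤ c*β/4)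
    (hkey4 : α*(2*c*ξi) ≤ c*β/4) (hαη : 0 ≤ α*η') (hc : 0 < c) (hβ : 0 < β)
    (he0 : 0 < e0) :
    sgD + α*((2*c*ξi - η')*e0) < 0 := by
  have h3 : 2*c*(A2*(eah-1)) ≤ 2*c*(β/4) := by nlinarith
  have h4 : 2*c*(A1+A2) ≤ 2*c*(-β) := by nlinarith
  have h5 : 2*c*A1 + 2*c*A2*eah + L*η' ≤ -2*c*β + 2*c*(β/4) + c*β/4 := by nlinarith
  have h6 : α*(2*c*ξi - η') ≤ c*β/4 := by nlinarith
  have h7 := mul_le_mul_of_nonneg_right h5 he0.le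
  have h8 := mul_le_mul_of_nonneg_right h6 he0.le
  nlinarith [mul_pos (mul_pos hc hβ) he0]

private lemma numeric2 (L α η' η₀ c β : ℝ) (h1 : (L+α)*η' ≤ (L+α)*η₀)
    (h2 : (L+α)*η₀ ≤ c*β/4) (h3 : 0 ≤ α*η') : L*η' ≤ c*β/4 := by nlinarith

private lemma numeric3 (α c ξi X β : ℝ) (h2 : (2*c)*(α*ξi) ≤ (2*c)*(α*X))
    (h3 : (2*c)*(α*X) ≤ (2*c)*(β/8)) : α*(2*c*ξi) ≤ c*β/4 := by nlinarith

private lemma numeric4 (α t0 θv hR : ℝ) (hα : 0 ≤ α) (hθ : -hR ≤ θv) :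
    -α*(t0+θv) ≤ α*hR + -α*t0 := by nlinarith

private lemma numeric5 (Bii L η' e0 c ξi : ℝ) (hL : -Bii ≤ L)
    (hprod : 0 ≤ (L+Bii)*(η'*e0)) :
    Bii*((2*c*ξi - η')*e0) ≤ Bii*(2*c*ξi)*e0 + L*η'*e0 := by nlinarith

private lemma numeric6 (sgD K e0 α : ℝ) (h : sgD + α*(K*e0) < 0) :
    sgD - K*(e0*(-α)) < 0 := by nlinarith

end numeric


section core

open Real

set_option maxHeartbeats 2000000 in
lemma core {N n : ℕ} {h : ℝ} (hh : 0 < h) (hn : 0 < n) (hN : 0 < N)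
    (B : Fin N → Matrix (Fin n) (Fin n) ℝ)
    (μ : Fin N → Fin n → Fin n → MeasureTheory.SignedMeasure (Set.Icc (-h) (0:ℝ)))
    (ξ : Fin n → ℝ) (hξ : ∀ i, 0 < ξ i) (β : ℝ) (hβ : 0 < β)
    (hM : ∀ k i, ((metz (B k) + Vmat (μ k)).mulVec ξ) i ≤ -β) :
    ExpStableSw h B μ := by
  haveI hne_n : Nonempty (Fin n) := Fin.pos_iff_nonempty.1 hn
  haveI hne_N : Nonempty (Fin N) := Fin.pos_iff_nonempty.1 hN
  -- basic quantities
  set m : ℝ := Finset.univ.inf' Finset.univ_nonempty ξ with hm_def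
  have hm_pos : 0 < m := (Finset.lt_inf'_iff _).2 fun i _ => hξ i
  have hm_le : ∀ i, m ≤ ξ i := fun i => Finset.inf'_le _ (Finset.mem_univ i)
  set X : ℝ := Finset.univ.sup' Finset.univ_nonempty ξ with hX_def
  have hX_ge : ∀ i, ξ i ≤ X := fun i => Finset.le_sup' _ (Finset.mem_univ i)
  have hX_pos : 0 < X := lt_of_lt_of_le hm_pos ((hm_le (Classical.arbitrary _)).trans
    (hX_ge (Classical.arbitrary _)))
  set L : ℝ := Finset.univ.sup' Finset.univ_nonempty
    (fun pr : Fin N × Fin n => |B pr.1 pr.2 pr.2|) with hL_def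
  have hL : ∀ k i, |B k i i| ≤ L := fun k i =>
    Finset.le_sup' (fun pr : Fin N × Fin n => |B pr.1 pr.2 pr.2|) (Finset.mem_univ (k, i))
  have hL0 : 0 ≤ L := le_trans (abs_nonneg _) (hL (Classical.arbitrary _) (Classical.arbitrary _))
  clear_value m X L
  have hmv : ∀ (Mx : Matrix (Fin n) (Fin n) ℝ) (i : Fin n),
      Mx.mulVec ξ i = ∑ j, Mx i j * ξ j := fun Mx i => by
    simp [Matrix.mulVec, dotProduct]
  have hV0 : ∀ k i, 0 ≤ (Vmat (μ k)).mulVec ξ i := by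
    intro k i
    rw [hmv]
    exact Finset.sum_nonneg fun j _ =>
      mul_nonneg (tvar_nonneg _) (hξ j).le
  set Vmax : ℝ := Finset.univ.sup' Finset.univ_nonempty
    (fun pr : Fin N × Fin n => ((Vmat (μ pr.1)).mulVec ξ) pr.2) + 1 with hVmax_def
  have hVle : ∀ k i, ((Vmat (μ k)).mulVec ξ) i ≤ Vmax := fun k i =>
    le_trans (Finset.le_sup' (fun pr : Fin N × Fin n => ((Vmat (μ pr.1)).mulVec ξ) pr.2)
      (Finset.mem_univ (k, i))) (by linarith)
  have hVmax_pos : 0 < Vmax := by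
    have h1 := hV0 (Classical.arbitrary (Fin N)) (Classical.arbitrary (Fin n))
    have h2 := Finset.le_sup' (fun pr : Fin N × Fin n => ((Vmat (μ pr.1)).mulVec ξ) pr.2)
      (Finset.mem_univ ((Classical.arbitrary (Fin N)), (Classical.arbitrary (Fin n))))
    rw [hVmax_def]
    linarith
  clear_value Vmax
  -- choice of α
  set α : ℝ := min (β/(8*X)) (Real.log (1 + β/(4*Vmax)) / h) with hα_def
  have hα_pos : 0 < α := by
    apply lt_min
    · positivity
    · apply div_pos _ hh
      apply Real.log_pos
      have : 0 < β/(4*Vmax) := by positivity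
      linarith
  have hαX : α * X ≤ β/8 := by
    have h1 : α ≤ β/(8*X) := min_le_left _ _
    have h2 : α * (8*X) ≤ β := (le_div_iff₀ (by positivity)).1 h1
    nlinarith
  have hexpαh : Real.exp (α*h) ≤ 1 + β/(4*Vmax) := by
    have h1 : α ≤ Real.log (1 + β/(4*Vmax)) / h := min_le_right _ _
    have h2 : α * h ≤ Real.log (1 + β/(4*Vmax)) := by
      rw [← le_div_iff₀ hh] at *
      exact h1
    calc Real.exp (α*h) ≤ Real.exp (Real.log (1 + β/(4*Vmax))) := Real.exp_le_exp.2 h2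
      _ = 1 + β/(4*Vmax) := Real.exp_log (by positivity)
  have hexpαh_ge1 : 1 ≤ Real.exp (α*h) := by
    have := Real.add_one_le_exp (α*h)
    nlinarith [hα_pos, hh]
  clear_value α
  refine ⟨2*X/m, by positivity, α, hα_pos, ?_⟩
  intro σ hσ φ x hsol t ht
  obtain ⟨hσneg, d, hd, τ, hτ0, hτstep, hτconst⟩ := hσ
  have hτge : ∀ k : ℕ, (k : ℝ) * d ≤ τ k := by
    intro k
    induction k with
    | zero => simp [hτ0]
    | succ k ih =>
      have := hτstep k
      push_cast
      nlinarith
  have hτ_nonneg : ∀ k, 0 ≤ τ k := fun k => le_trans (by positivity) (hτge k)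
  obtain ⟨hcont, hinit, hode⟩ := hsol
  have hCA : ∀ u : ℝ, -h < u → ∀ i, ContinuousAt (fun v => x v i) u := by
    intro u hu i
    have h1 : ContinuousAt x u := hcont.continuousAt (Ici_mem_nhds hu)
    exact ((continuous_apply i).continuousAt).comp h1
  have hφbound : ∀ u, -h ≤ u → u ≤ 0 → ∀ i, |x u i| ≤ ‖φ‖ := by
    intro u h1 h2 i
    have hx : x u = φ ⟨u, h1, h2⟩ := hinit ⟨u, h1, h2⟩
    rw [hx]
    calc |φ ⟨u, h1, h2⟩ i| ≤ ‖φ ⟨u, h1, h2⟩‖ := by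
          rw [← Real.norm_eq_abs]; exact norm_le_pi_norm _ i
      _ ≤ ‖φ‖ := φ.norm_coe_le_norm _
  suffices key : ∀ κ : ℝ, 0 < κ → ‖x t‖ ≤ 2*X/m * Real.exp (-α * t) * (‖φ‖ + κ) by
    have hMe : 0 < 2*X/m * Real.exp (-α * t) := by positivity
    refine le_of_forall_pos_le_add ?_
    intro ε hε
    have hk := key (ε / (2*X/m * Real.exp (-α * t))) (by positivity)
    calc ‖x t‖ ≤ 2*X/m * Real.exp (-α*t) * (‖φ‖ + ε/(2*X/m * Real.exp (-α*t))) := hk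
      _ = 2*X/m * Real.exp (-α*t) * ‖φ‖ + ε := by field_simp
  intro κ hκ
  set c : ℝ := (‖φ‖ + κ)/m with hc_def
  have hc_pos : 0 < c := div_pos (by positivity) hm_pos
  have hcm : c * m = ‖φ‖ + κ := by
    rw [hc_def]
    field_simp
  have hLα : 0 < L + α := by linarith
  set η₀ : ℝ := c * min m (β/(4*(L+α))) with hη₀_def
  have hη₀_pos : 0 < η₀ := mul_pos hc_pos (lt_min hm_pos (by positivity))
  have hη₀m : η₀ ≤ c * m := mul_le_mul_of_nonneg_left (min_le_left _ _) hc_pos.le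
  have hη₀β : (L+α) * η₀ ≤ c * β/4 := by
    calc (L+α) * η₀ ≤ (L+α) * (c * (β/(4*(L+α)))) := by
          apply mul_le_mul_of_nonneg_left _ hLα.le
          exact mul_le_mul_of_nonneg_left (min_le_right _ _) hc_pos.le
      _ = c * β/4 := by field_simp
  have hcξ : ∀ i, c * m ≤ c * ξ i := fun i =>
    mul_le_mul_of_nonneg_left (hm_le i) hc_pos.le
  clear_value c η₀
  -- main induction over switching intervals
  have KEY : ∀ mm : ℕ, ∀ u, -h ≤ u → u ≤ τ mm → ∀ i,
      |x u i| ≤ (2*c*ξ i - η₀/2^mm) * Real.exp (-α*u) := by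
    intro mm
    induction mm with
    | zero =>
      intro u h1 h2 i
      rw [hτ0] at h2
      have hb1 : |x u i| ≤ ‖φ‖ := hφbound u h1 h2 i
      have hb2 : ‖φ‖ ≤ 2*c*ξ i - η₀/2^0 := by
        have h5 := hcξ i
        simp only [pow_zero, div_one]
        linarith
      have hb3 : (1:ℝ) ≤ Real.exp (-α*u) := by
        have h6 : 0 ≤ -α*u := by
          rw [neg_mul]
          exact neg_nonneg.2 (mul_nonpos_iff.2 (Or.inl ⟨hα_pos.le, h2⟩))
        linarith only [Real.add_one_le_exp (-α*u), h6]
      have hb4 : 0 ≤ 2*c*ξ i - η₀/2^0 := le_trans (norm_nonneg φ) hb2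
      calc |x u i| ≤ 2*c*ξ i - η₀/2^0 := hb1.trans hb2
        _ ≤ (2*c*ξ i - η₀/2^0) * Real.exp (-α*u) := le_mul_of_one_le_right hb4 hb3
    | succ mm ih =>
      -- quantities for this interval
      have h2pow : (0:ℝ) < 2^mm := by positivity
      have h2pow1 : (0:ℝ) < 2^(mm+1) := by positivity
      have hη'le : η₀/2^(mm+1) ≤ η₀ := by
        apply div_le_self hη₀_pos.le
        exact one_le_pow₀ (by norm_num)
      have hη'pos : 0 < η₀/2^(mm+1) := by positivity
      have hη'lt : η₀/2^(mm+1) < η₀/2^mm := by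
        apply div_lt_div_of_pos_left hη₀_pos h2pow
        rw [pow_succ]
        linarith [h2pow]
      have GOOD : ∀ u, τ mm ≤ u → u ≤ τ (mm+1) → ∀ i,
          |x u i| ≤ (2*c*ξ i - η₀/2^(mm+1)) * Real.exp (-α*u) := by
        set η' : ℝ := η₀/2^(mm+1) with hη'_def
        by_contra hcon
        push_neg at hcon
        obtain ⟨u₀, hu₀1, hu₀2, i₀', hviol⟩ := hcon
        set E : Set ℝ := {u : ℝ | τ mm ≤ u ∧ u ≤ τ (mm+1) ∧
          ∃ i, (2*c*ξ i - η') * Real.exp (-α*u) < |x u i|} with hE_def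
        have hE_ne : E.Nonempty := ⟨u₀, hu₀1, hu₀2, i₀', hviol⟩
        have hE_bdd : BddBelow E := ⟨τ mm, fun u hu => hu.1⟩
        set t0 : ℝ := sInf E with ht0_def
        have ht0_ge : τ mm ≤ t0 := le_csInf hE_ne fun u hu => hu.1
        have ht0_le : t0 ≤ τ (mm+1) := (csInf_le hE_bdd ⟨hu₀1, hu₀2, i₀', hviol⟩).trans hu₀2
        have hτmm_h : -h < τ mm := lt_of_lt_of_le (by linarith) (hτ_nonneg mm)
        have ht0_h : -h < t0 := lt_of_lt_of_le hτmm_h ht0_ge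
        have hbefore : ∀ u, τ mm ≤ u → u < t0 → ∀ i,
            |x u i| ≤ (2*c*ξ i - η') * Real.exp (-α*u) := by
          intro u h1 h2 i
          by_contra hlt
          push_neg at hlt
          exact absurd (csInf_le hE_bdd ⟨h1, h2.le.trans ht0_le, i, hlt⟩) (not_le.2 h2)
        have hstart : ∀ i, |x (τ mm) i| < (2*c*ξ i - η') * Real.exp (-α*(τ mm)) := by
          intro i
          have h1 := ih (τ mm) hτmm_h.le le_rfl i
          have h2 : (2*c*ξ i - η₀/2^mm) < 2*c*ξ i - η' := by
            rw [hη'_def]; linarith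
          exact lt_of_le_of_lt h1 (mul_lt_mul_of_pos_right h2 (Real.exp_pos _))
        have hAt : ∀ i, |x t0 i| ≤ (2*c*ξ i - η') * Real.exp (-α*t0) := by
          intro i
          rcases eq_or_lt_of_le ht0_ge with heq | hlt
          · exact (heq ▸ (hstart i)).le
          · have hGc : ContinuousAt
                (fun u => (2*c*ξ i - η') * Real.exp (-α*u) - |x u i|) t0 := by
              apply ContinuousAt.sub
              · exact (continuous_const.mul ((Real.continuous_exp).comp
                  (continuous_const.mul continuous_id))).continuousAt
              · exact (hCA t0 ht0_h i).abs
            have hev : ∀ᶠ u in nhdsWithin t0 (Set.Iio t0),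
                0 ≤ (2*c*ξ i - η') * Real.exp (-α*u) - |x u i| := by
              filter_upwards [Ioo_mem_nhdsLT_of_mem (Set.mem_Ioc.2 ⟨hlt, le_rfl⟩)] with u hu
              have := hbefore u hu.1.le hu.2 i
              linarith
            have htend : Filter.Tendsto
                (fun u => (2*c*ξ i - η') * Real.exp (-α*u) - |x u i|)
                (nhdsWithin t0 (Set.Iio t0))
                (nhds ((2*c*ξ i - η') * Real.exp (-α*t0) - |x t0 i|)) :=
              hGc.continuousWithinAt.tendsto
            have := ge_of_tendsto htend hev
            linarith
        have ht0_notmem : t0 ∉ E := by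
          intro hmem
          obtain ⟨_, _, i, hi⟩ := hmem
          exact absurd (hAt i) (not_le.2 hi)
        have hfreq : ∃ᶠ u in nhdsWithin t0 (Set.Ioi t0), u ∈ E := by
          rw [Filter.frequently_iff]
          intro U hU
          obtain ⟨b, hb, hsub⟩ := mem_nhdsGT_iff_exists_Ioo_subset.1 hU
          obtain ⟨u, huE, hub⟩ := (csInf_lt_iff hE_bdd hE_ne).1 hb
          have hgt : t0 < u := lt_of_le_of_ne (csInf_le hE_bdd huE)
            fun he => ht0_notmem (he ▸ huE)
          exact ⟨u, hsub ⟨hgt, hub⟩, huE⟩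
        have ht0_lt : t0 < τ (mm+1) := by
          rcases lt_or_eq_of_le ht0_le with hlt | heq
          · exact hlt
          · exfalso
            obtain ⟨u, huE⟩ := hE_ne
            have h1 : t0 ≤ u := csInf_le hE_bdd huE
            have h2 : u ≤ t0 := heq ▸ huE.2.1
            exact ht0_notmem (le_antisymm h2 h1 ▸ huE)
        have hfreq2 : ∃ i, ∃ᶠ u in nhdsWithin t0 (Set.Ioi t0),
            (2*c*ξ i - η') * Real.exp (-α*u) < |x u i| := by
          by_contra hcon2
          push_neg at hcon2
          have hev : ∀ᶠ u in nhdsWithin t0 (Set.Ioi t0), ∀ i,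
              ¬ ((2*c*ξ i - η') * Real.exp (-α*u) < |x u i|) :=
            Filter.eventually_all.2 fun i => (hcon2 i).mono fun u hu => not_lt.2 hu
          obtain ⟨u, huE, hall⟩ := hfreq.and_eventually hev |>.exists
          obtain ⟨_, _, i, hi⟩ := huE
          exact hall i hi
        obtain ⟨i0, hfreq_i⟩ := hfreq2
        have heq_i0 : |x t0 i0| = (2*c*ξ i0 - η') * Real.exp (-α*t0) := by
          refine le_antisymm (hAt i0) ?_
          by_contra hlt
          push_neg at hlt
          have hGc : ContinuousAt
              (fun u => (2*c*ξ i0 - η') * Real.exp (-α*u) - |x u i0|) t0 := by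
            apply ContinuousAt.sub
            · exact (continuous_const.mul ((Real.continuous_exp).comp
                (continuous_const.mul continuous_id))).continuousAt
            · exact (hCA t0 ht0_h i0).abs
          have hpos : 0 < (2*c*ξ i0 - η') * Real.exp (-α*t0) - |x t0 i0| := by linarith
          have hev : ∀ᶠ u in nhds t0,
              0 < (2*c*ξ i0 - η') * Real.exp (-α*u) - |x u i0| :=
            hGc (Ioi_mem_nhds hpos)
          have hev2 : ∀ᶠ u in nhdsWithin t0 (Set.Ioi t0),
              0 < (2*c*ξ i0 - η') * Real.exp (-α*u) - |x u i0| :=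
            hev.filter_mono nhdsWithin_le_nhds
          obtain ⟨u, h1, h2⟩ := hfreq_i.and_eventually hev2 |>.exists
          linarith
        have htmm_lt : τ mm < t0 := by
          rcases eq_or_lt_of_le ht0_ge with heq | hlt
          · exfalso
            have := hstart i0
            rw [heq] at this
            rw [heq_i0] at this
            exact lt_irrefl _ this
          · exact hlt
        have ht0_pos : (0:ℝ) ≤ t0 := (hτ_nonneg mm).trans ht0_ge
        have hσconst : ∀ᶠ s in nhds t0, σ s = σ t0 := by
          have hmem : Set.Ioo (τ mm) (τ (mm+1)) ∈ nhds t0 := Ioo_mem_nhds htmm_lt ht0_lt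
          filter_upwards [hmem] with s hs
          rw [hτconst mm s ⟨hs.1.le, hs.2⟩, hτconst mm t0 ⟨ht0_ge, ht0_lt⟩]
        have hD := hode t0 ht0_pos hσconst i0
        set k := σ t0 with hk_def
        set D : ℝ := (∑ j, B k i0 j * x t0 j) +
          ∑ j, sint (μ k i0 j) fun θ => x (t0 + (θ:ℝ)) j with hD_def
        -- sign
        set sg : ℝ := if 0 ≤ x t0 i0 then 1 else -1 with hsg_def
        have hsg1 : sg = 1 ∨ sg = -1 := by
          rw [hsg_def]; split_ifs <;> simp
        have hsg_abs : sg * x t0 i0 = |x t0 i0| := by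
          rw [hsg_def]; split_ifs with hx
          · rw [abs_of_nonneg hx]; ring
          · rw [abs_of_neg (lt_of_not_ge hx)]; ring
        have hsg_le : ∀ y : ℝ, sg * y ≤ |y| := by
          intro y
          rcases hsg1 with h | h <;> rw [h] <;>
            simp [le_abs_self, neg_le_abs, neg_le, neg_mul, one_mul]
        -- history bound
        have HIST : ∀ u, -h ≤ u → u ≤ t0 → ∀ j,
            |x u j| ≤ 2*c*ξ j * Real.exp (-α*u) := by
          intro u h1 h2 j
          rcases le_or_gt u (τ mm) with hle | hgt
          · refine (ih u h1 hle j).trans ?_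
            exact mul_le_mul_of_nonneg_right
              (by linarith only [div_pos hη₀_pos h2pow]) (Real.exp_pos _).le
          · rcases lt_or_eq_of_le h2 with hlt | heq2
            · refine (hbefore u hgt.le hlt j).trans ?_
              exact mul_le_mul_of_nonneg_right
                (by linarith only [hη'pos]) (Real.exp_pos _).le
            · rw [heq2]
              refine (hAt j).trans ?_
              exact mul_le_mul_of_nonneg_right
                (by linarith only [hη'pos]) (Real.exp_pos _).le
        -- delay estimate
        have hdelay : ∀ j, |sint (μ k i0 j) fun θ => x (t0 + (θ:ℝ)) j| ≤
            2*c*ξ j * (Real.exp (α*h) * Real.exp (-α*t0)) * tvar (μ k i0 j) := by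
          intro j
          have hC : ∀ θ : Set.Icc (-h) (0:ℝ), |x (t0 + (θ:ℝ)) j| ≤
              2*c*ξ j * (Real.exp (α*h) * Real.exp (-α*t0)) := by
            rintro ⟨θv, hθ1, hθ2⟩
            have h1 : -h ≤ t0 + θv := by linarith
            have h2 : t0 + θv ≤ t0 := by linarith
            have h3 := HIST (t0+θv) h1 h2 j
            refine h3.trans ?_
            have h4 : Real.exp (-α*(t0+θv)) ≤ Real.exp (α*h) * Real.exp (-α*t0) := by
              rw [← Real.exp_add]
              exact Real.exp_le_exp.2 (numeric4 α t0 θv h hα_pos.le hθ1)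
            have h5 : (0:ℝ) ≤ 2*c*ξ j :=
              mul_nonneg (mul_nonneg (by norm_num) hc_pos.le) (hξ j).le
            exact mul_le_mul_of_nonneg_left h4 h5
          exact abs_sint_le (μ k i0 j) _ _ hC
        have hexp0 : (0:ℝ) < Real.exp (-α*t0) := Real.exp_pos _
        have hxj_bound : ∀ j, |x t0 j| ≤ 2*c*ξ j * Real.exp (-α*t0) :=
          fun j => HIST t0 (by linarith) le_rfl j
        have hmetz_off : ∀ j, j ≠ i0 → metz (B k) i0 j = |B k i0 j| := by
          intro j hj
          simp only [metz, Matrix.of_apply, if_neg (Ne.symm hj)]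
        have hmetz_diag : metz (B k) i0 i0 = B k i0 i0 := by
          simp [metz]
        have hoff : ∀ j ∈ Finset.univ.erase i0, sg * (B k i0 j * x t0 j) ≤
            metz (B k) i0 j * (2*c*ξ j) * Real.exp (-α*t0) := by
          intro j hj
          have hji := Finset.ne_of_mem_erase hj
          have h1 : sg * (B k i0 j * x t0 j) ≤ |B k i0 j * x t0 j| := hsg_le _
          have h2 : |B k i0 j * x t0 j| = |B k i0 j| * |x t0 j| := abs_mul _ _
          have h4 : |B k i0 j| * |x t0 j| ≤ |B k i0 j| * (2*c*ξ j * Real.exp (-α*t0)) :=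
            mul_le_mul_of_nonneg_left (hxj_bound j) (abs_nonneg _)
          rw [hmetz_off j hji]
          calc sg * (B k i0 j * x t0 j) ≤ |B k i0 j| * |x t0 j| := h2 ▸ h1
            _ ≤ |B k i0 j| * (2*c*ξ j * Real.exp (-α*t0)) := h4
            _ = |B k i0 j| * (2*c*ξ j) * Real.exp (-α*t0) := by ring
        have hdiag : B k i0 i0 * (sg * x t0 i0) ≤
            metz (B k) i0 i0 * (2*c*ξ i0) * Real.exp (-α*t0) + L*η'*Real.exp (-α*t0) := by
          rw [hsg_abs, heq_i0, hmetz_diag]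
          have h1 := hL k i0
          have h2 : -B k i0 i0 ≤ L := le_trans (neg_le_abs _) h1
          exact numeric5 _ _ _ _ _ _ h2 (mul_nonneg
            (by linarith : (0:ℝ) ≤ L + B k i0 i0) (mul_nonneg hη'pos.le hexp0.le))
        have hexpand : sg * (∑ j, B k i0 j * x t0 j) =
            (∑ j ∈ Finset.univ.erase i0, sg * (B k i0 j * x t0 j))
              + B k i0 i0 * (sg * x t0 i0) := by
          rw [Finset.mul_sum, ← Finset.sum_erase_add _ _ (Finset.mem_univ i0)]
          ring
        have hmatsum : ∑ j, metz (B k) i0 j * (2*c*ξ j) = 2*c*((metz (B k)).mulVec ξ i0) := by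
          rw [hmv, Finset.mul_sum]
          exact Finset.sum_congr rfl fun j _ => by ring
        have hmat : sg * (∑ j, B k i0 j * x t0 j) ≤
            2*c*((metz (B k)).mulVec ξ i0) * Real.exp (-α*t0) + L*η'*Real.exp (-α*t0) := by
          rw [hexpand]
          have h1 := Finset.sum_le_sum hoff
          have h2 : (∑ j ∈ Finset.univ.erase i0, metz (B k) i0 j * (2*c*ξ j) * Real.exp (-α*t0))
              + metz (B k) i0 i0 * (2*c*ξ i0) * Real.exp (-α*t0)
              = 2*c*((metz (B k)).mulVec ξ i0) * Real.exp (-α*t0) := by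
            rw [← hmatsum, Finset.sum_mul, ← Finset.sum_erase_add _ _ (Finset.mem_univ i0)]
          linarith [hdiag]
        have hdelsum : sg * (∑ j, sint (μ k i0 j) fun θ => x (t0 + (θ:ℝ)) j) ≤
            2*c*((Vmat (μ k)).mulVec ξ i0) * (Real.exp (α*h) * Real.exp (-α*t0)) := by
          have h1 : sg * (∑ j, sint (μ k i0 j) fun θ => x (t0 + (θ:ℝ)) j) ≤
              |∑ j, sint (μ k i0 j) fun θ => x (t0 + (θ:ℝ)) j| := hsg_le _
          have h2 : |∑ j, sint (μ k i0 j) fun θ => x (t0 + (θ:ℝ)) j| ≤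
              ∑ j, |sint (μ k i0 j) fun θ => x (t0 + (θ:ℝ)) j| :=
            Finset.abs_sum_le_sum_abs _ _
          have h3 : (∑ j, |sint (μ k i0 j) fun θ => x (t0 + (θ:ℝ)) j|) ≤
              ∑ j, 2*c*ξ j * (Real.exp (α*h) * Real.exp (-α*t0)) * tvar (μ k i0 j) :=
            Finset.sum_le_sum fun j _ => hdelay j
          have h4 : (∑ j, 2*c*ξ j * (Real.exp (α*h) * Real.exp (-α*t0)) * tvar (μ k i0 j))
              = 2*c*((Vmat (μ k)).mulVec ξ i0) * (Real.exp (α*h) * Real.exp (-α*t0)) := by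
            rw [hmv, Finset.mul_sum, Finset.sum_mul]
            refine Finset.sum_congr rfl fun j _ => ?_
            have hV : Vmat (μ k) i0 j = tvar (μ k i0 j) := rfl
            rw [hV]
            ring
          linarith
        -- numeric combination
        have hA12 : (metz (B k)).mulVec ξ i0 + (Vmat (μ k)).mulVec ξ i0 ≤ -β := by
          have := hM k i0
          rwa [Matrix.add_mulVec, Pi.add_apply] at this
        have hA2nn : 0 ≤ (Vmat (μ k)).mulVec ξ i0 := hV0 k i0
        have hA2le : (Vmat (μ k)).mulVec ξ i0 ≤ Vmax := hVle k i0
        set A1 := (metz (B k)).mulVec ξ i0 with hA1_def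
        set A2 := (Vmat (μ k)).mulVec ξ i0 with hA2_def
        have hkey2 : A2 * (Real.exp (α*h) - 1) ≤ β/4 := by
          have h1 : Real.exp (α*h) - 1 ≤ β/(4*Vmax) := by linarith [hexpαh]
          have h2 : 0 ≤ Real.exp (α*h) - 1 := by linarith [hexpαh_ge1]
          have hVne : Vmax ≠ 0 := hVmax_pos.ne'
          calc A2 * (Real.exp (α*h) - 1) ≤ Vmax * (β/(4*Vmax)) :=
              mul_le_mul hA2le h1 h2 hVmax_pos.le
            _ = β/4 := by
              field_simp
        have hkey3 : L*η' ≤ c*β/4 := by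
          have h1 : (L+α)*η' ≤ (L+α)*η₀ := mul_le_mul_of_nonneg_left hη'le hLα.le
          have h2 : (L+α)*η₀ ≤ c*β/4 := hη₀β
          exact numeric2 L α η' η₀ c β h1 h2 (mul_nonneg hα_pos.le hη'pos.le)
        have hkey4 : α*(2*c*ξ i0) ≤ c*β/4 := by
          have h1 : α*ξ i0 ≤ α*X := mul_le_mul_of_nonneg_left (hX_ge i0) hα_pos.le
          have h2 : (2*c)*(α*ξ i0) ≤ (2*c)*(α*X) :=
            mul_le_mul_of_nonneg_left h1 (by linarith)
          have h3 : (2*c)*(α*X) ≤ (2*c)*(β/8) :=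
            mul_le_mul_of_nonneg_left hαX (by linarith)
          exact numeric3 α c (ξ i0) X β h2 h3
        have hsum : sg * D + α*((2*c*ξ i0 - η') * Real.exp (-α*t0)) < 0 := by
          have h1 : sg * D ≤ 2*c*A1*Real.exp (-α*t0) + L*η'*Real.exp (-α*t0)
              + 2*c*A2*(Real.exp (α*h) * Real.exp (-α*t0)) := by
            rw [hD_def]
            calc sg * ((∑ j, B k i0 j * x t0 j)
                  + ∑ j, sint (μ k i0 j) fun θ => x (t0 + (θ:ℝ)) j)
                = sg * (∑ j, B k i0 j * x t0 j)
                  + sg * (∑ j, sint (μ k i0 j) fun θ => x (t0 + (θ:ℝ)) j) := by ring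
              _ ≤ _ := by linarith [hmat, hdelsum]
          exact numeric1 (sg*D) A1 A2 L η' c β α (ξ i0) (Real.exp (α*h))
            (Real.exp (-α*t0)) h1 hA12 hkey2 hkey3 hkey4
            (mul_nonneg hα_pos.le hη'pos.le) hc_pos hβ hexp0
        -- comparison function has negative right derivative at t0
        have hBd : HasDerivAt (fun u => (2*c*ξ i0 - η') * Real.exp (-α*u))
            ((2*c*ξ i0 - η') * (Real.exp (-α*t0) * (-α))) t0 := by
          have f1 : HasDerivAt (fun u : ℝ => -α*u) (-α) t0 := by
            simpa using (hasDerivAt_id t0).const_mul (-α)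
          exact (f1.exp).const_mul _
        have hG : HasDerivWithinAt
            (fun u => sg * x u i0 - (2*c*ξ i0 - η') * Real.exp (-α*u))
            (sg * D - (2*c*ξ i0 - η') * (Real.exp (-α*t0) * (-α))) (Set.Ici t0) t0 :=
          (hD.const_mul sg).sub (hBd.hasDerivWithinAt)
        have hGd_neg : sg * D - (2*c*ξ i0 - η') * (Real.exp (-α*t0) * (-α)) < 0 := by
          exact numeric6 (sg*D) (2*c*ξ i0 - η') (Real.exp (-α*t0)) α hsum
        have hG0 : sg * x t0 i0 - (2*c*ξ i0 - η') * Real.exp (-α*t0) = 0 := by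
          rw [hsg_abs, heq_i0]; ring
        have hGev := eventually_neg_of_derivWithin_neg hG hGd_neg hG0
        have hbndpos : 0 < (2*c*ξ i0 - η') * Real.exp (-α*t0) := by
          have h1 : η' ≤ c * m := hη'le.trans hη₀m
          have h2 := hcξ i0
          have h3 : 0 < 2*c*ξ i0 - η' := by
            linarith only [h1, h2, mul_pos hc_pos (hξ i0)]
          exact mul_pos h3 hexp0
        have hother : ∀ᶠ u in nhds t0,
            0 < (2*c*ξ i0 - η') * Real.exp (-α*u) - (-sg) * x u i0 := by
          have hc1 : ContinuousAt
              (fun u => (2*c*ξ i0 - η') * Real.exp (-α*u) - (-sg) * x u i0) t0 := by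
            apply ContinuousAt.sub
            · exact (continuous_const.mul ((Real.continuous_exp).comp
                (continuous_const.mul continuous_id))).continuousAt
            · exact (continuousAt_const.mul (hCA t0 ht0_h i0))
          have hpos0 : 0 < (2*c*ξ i0 - η') * Real.exp (-α*t0) - (-sg) * x t0 i0 := by
            have h1 : (-sg) * x t0 i0 = -|x t0 i0| := by rw [← hsg_abs]; ring
            rw [h1, heq_i0]
            linarith [hbndpos]
          exact hc1 (Ioi_mem_nhds hpos0)
        have hcomb := hGev.and (hother.filter_mono nhdsWithin_le_nhds)
        obtain ⟨u, hu1, hu2, hu3⟩ := (hfreq_i.and_eventually hcomb).exists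
        have hxlt : |x u i0| < (2*c*ξ i0 - η') * Real.exp (-α*u) := by
          rcases hsg1 with hsgv | hsgv <;> rw [hsgv] at hu2 hu3
          · exact abs_lt.2 ⟨by linarith, by linarith⟩
          · exact abs_lt.2 ⟨by linarith, by linarith⟩
        linarith
      intro u h1 h2 i
      rcases le_or_gt u (τ mm) with hle | hgt
      · have := ih u h1 hle i
        have h3 : (2*c*ξ i - η₀/2^mm) ≤ 2*c*ξ i - η₀/2^(mm+1) := by linarith
        exact this.trans (mul_le_mul_of_nonneg_right h3 (Real.exp_pos _).le)
      · exact GOOD u hgt.le h2 i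
  -- conclusion
  obtain ⟨mm, hmm⟩ := exists_nat_ge (t/d)
  have htle : t ≤ τ mm := by
    have h1 : t ≤ (mm:ℝ) * d := by
      rw [div_le_iff₀ hd] at hmm
      exact hmm
    exact h1.trans (hτge mm)
  have hfin : ∀ i, |x t i| ≤ 2*c*X * Real.exp (-α*t) := by
    intro i
    have h1 := KEY mm t (by linarith) htle i
    have h2 : 2*c*ξ i - η₀/2^mm ≤ 2*c*X := by
      have h3 : 2*c*ξ i ≤ 2*c*X :=
        mul_le_mul_of_nonneg_left (hX_ge i) (by linarith only [hc_pos])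
      have h4 : 0 < η₀/2^mm := by positivity
      linarith only [h3, h4]
    exact h1.trans (mul_le_mul_of_nonneg_right h2 (Real.exp_pos _).le)
  have hnorm : ‖x t‖ ≤ 2*c*X * Real.exp (-α*t) := by
    refine (pi_norm_le_iff_of_nonneg (by positivity)).2 fun i => ?_
    rw [Real.norm_eq_abs]
    exact hfin i
  refine hnorm.trans (le_of_eq ?_)
  rw [hc_def]
  field_simp

end core

section mainproof

lemma mnorm_nonneg {h : ℝ} {p q : ℕ}
    (ν : Fin p → Fin q → MeasureTheory.SignedMeasure (Set.Icc (-h) (0:ℝ))) : 0 ≤ mnorm ν :=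
  Real.iSup_nonneg fun _ => Finset.sum_nonneg fun _ _ => tvar_nonneg _

lemma xi_le_norm {n : ℕ} (ξ : Fin n → ℝ) (j : Fin n) : ξ j ≤ ‖ξ‖ :=
  (le_abs_self _).trans (by rw [← Real.norm_eq_abs]; exact norm_le_pi_norm ξ j)

lemma metz_pert_bound {n : ℕ} (A P : Matrix (Fin n) (Fin n) ℝ) (ξ : Fin n → ℝ)
    (hξ : ∀ j, 0 ≤ ξ j) (i : Fin n) :
    (metz (A + P)).mulVec ξ i ≤ (metz A).mulVec ξ i + matNorm P * ‖ξ‖ := by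
  have hmv : ∀ (M : Matrix (Fin n) (Fin n) ℝ), M.mulVec ξ i = ∑ j, M i j * ξ j := fun M => by
    simp [Matrix.mulVec, dotProduct]
  rw [hmv, hmv]
  have hentry : ∀ j, metz (A+P) i j ≤ metz A i j + |P i j| := by
    intro j
    by_cases hij : i = j
    · subst hij
      simp only [metz, Matrix.of_apply, Matrix.add_apply, eq_self_iff_true, if_true]
      linarith [le_abs_self (P i i)]
    · simp only [metz, Matrix.of_apply, if_neg hij, Matrix.add_apply]
      exact abs_add_le _ _
  calc ∑ j, metz (A+P) i j * ξ j ≤ ∑ j, (metz A i j + |P i j|) * ξ j :=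
      Finset.sum_le_sum fun j _ => mul_le_mul_of_nonneg_right (hentry j) (hξ j)
    _ = ∑ j, metz A i j * ξ j + ∑ j, |P i j| * ξ j := by
      rw [← Finset.sum_add_distrib]
      exact Finset.sum_congr rfl fun j _ => by ring
    _ ≤ ∑ j, metz A i j * ξ j + matNorm P * ‖ξ‖ := by
      have h1 : ∑ j, |P i j| * ξ j ≤ ∑ j, |P i j| * ‖ξ‖ :=
        Finset.sum_le_sum fun j _ =>
          mul_le_mul_of_nonneg_left (xi_le_norm ξ j) (abs_nonneg _)
      have h2 : (∑ j, |P i j|) * ‖ξ‖ ≤ matNorm P * ‖ξ‖ :=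
        mul_le_mul_of_nonneg_right (rowsum_le_matNorm P i) (norm_nonneg ξ)
      rw [Finset.sum_mul] at h2
      linarith

lemma pert_row_bound {h : ℝ} {n s p : ℕ}
    (D1 : Matrix (Fin n) (Fin s) ℝ)
    (δ : Fin s → Fin p → MeasureTheory.SignedMeasure (Set.Icc (-h) (0:ℝ)))
    (E1 : Matrix (Fin p) (Fin n) ℝ) (i : Fin n) :
    ∑ j, ∑ a, ∑ b, |D1 i a| * |E1 b j| * tvar (δ a b) ≤
      matNorm D1 * mnorm δ * matNorm E1 := by
  have mnd : 0 ≤ mnorm δ := mnorm_nonneg δ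
  have hE : 0 ≤ matNorm E1 := matNorm_nonneg E1
  have swap : (∑ j, ∑ a, ∑ b, |D1 i a| * |E1 b j| * tvar (δ a b))
      = ∑ a, ∑ b, (|D1 i a| * tvar (δ a b)) * ∑ j, |E1 b j| := by
    rw [Finset.sum_comm]
    refine Finset.sum_congr rfl fun a _ => ?_
    rw [Finset.sum_comm]
    refine Finset.sum_congr rfl fun b _ => ?_
    rw [Finset.mul_sum]
    exact Finset.sum_congr rfl fun j _ => by ring
  rw [swap]
  calc ∑ a, ∑ b, (|D1 i a| * tvar (δ a b)) * ∑ j, |E1 b j|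
      ≤ ∑ a, ∑ b, (|D1 i a| * tvar (δ a b)) * matNorm E1 := by
        refine Finset.sum_le_sum fun a _ => Finset.sum_le_sum fun b _ => ?_
        exact mul_le_mul_of_nonneg_left (rowsum_le_matNorm E1 b)
          (mul_nonneg (abs_nonneg _) (tvar_nonneg _))
    _ = ∑ a, |D1 i a| * (∑ b, tvar (δ a b)) * matNorm E1 := by
        refine Finset.sum_congr rfl fun a _ => ?_
        rw [← Finset.sum_mul, ← Finset.mul_sum]
    _ ≤ ∑ a, |D1 i a| * mnorm δ * matNorm E1 := by
        refine Finset.sum_le_sum fun a _ => ?_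
        have hrow : ∑ b, tvar (δ a b) ≤ mnorm δ :=
          le_ciSup (f := fun a => ∑ b, tvar (δ a b))
            (Set.Finite.bddAbove (Set.finite_range _)) a
        exact mul_le_mul_of_nonneg_right
          (mul_le_mul_of_nonneg_left hrow (abs_nonneg _)) hE
    _ = (∑ a, |D1 i a|) * mnorm δ * matNorm E1 := by
        rw [Finset.sum_mul, Finset.sum_mul]
    _ ≤ matNorm D1 * mnorm δ * matNorm E1 :=
        mul_le_mul_of_nonneg_right (mul_le_mul_of_nonneg_right
          (rowsum_le_matNorm D1 i) mnd) hE

lemma Vmat_pert_bound {h : ℝ} {n s p : ℕ}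
    (ν : Fin n → Fin n → MeasureTheory.SignedMeasure (Set.Icc (-h) (0:ℝ)))
    (D1 : Matrix (Fin n) (Fin s) ℝ)
    (δ : Fin s → Fin p → MeasureTheory.SignedMeasure (Set.Icc (-h) (0:ℝ)))
    (E1 : Matrix (Fin p) (Fin n) ℝ) (ξ : Fin n → ℝ)
    (hξ : ∀ j, 0 ≤ ξ j) (i : Fin n) :
    (Vmat (pertKernel ν D1 δ E1)).mulVec ξ i ≤
      (Vmat ν).mulVec ξ i + matNorm D1 * mnorm δ * matNorm E1 * ‖ξ‖ := by
  have hmv : ∀ (M : Matrix (Fin n) (Fin n) ℝ), M.mulVec ξ i = ∑ j, M i j * ξ j := fun M => by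
    simp [Matrix.mulVec, dotProduct]
  rw [hmv, hmv]
  have hentry : ∀ j, Vmat (pertKernel ν D1 δ E1) i j ≤
      Vmat ν i j + ∑ a, ∑ b, |D1 i a| * |E1 b j| * tvar (δ a b) := by
    intro j
    have h1 : Vmat (pertKernel ν D1 δ E1) i j =
        tvar (ν i j + ∑ a, ∑ b, (D1 i a * E1 b j) • δ a b) := rfl
    have h3 : Vmat ν i j = tvar (ν i j) := rfl
    rw [h1, h3]
    refine (tvar_add_le _ _).trans ?_
    have h2 : tvar (∑ a, ∑ b, (D1 i a * E1 b j) • δ a b) ≤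
        ∑ a, ∑ b, |D1 i a| * |E1 b j| * tvar (δ a b) := by
      refine (tvar_sum_le _ _).trans (Finset.sum_le_sum fun a _ => ?_)
      refine (tvar_sum_le _ _).trans (Finset.sum_le_sum fun b _ => ?_)
      refine (tvar_smul_le _ _).trans (le_of_eq ?_)
      rw [abs_mul]
    linarith
  have hSnn : ∀ j, 0 ≤ ∑ a, ∑ b, |D1 i a| * |E1 b j| * tvar (δ a b) :=
    fun j => Finset.sum_nonneg fun a _ => Finset.sum_nonneg fun b _ =>
      mul_nonneg (mul_nonneg (abs_nonneg _) (abs_nonneg _)) (tvar_nonneg _)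
  calc ∑ j, Vmat (pertKernel ν D1 δ E1) i j * ξ j
      ≤ ∑ j, (Vmat ν i j + ∑ a, ∑ b, |D1 i a| * |E1 b j| * tvar (δ a b)) * ξ j :=
        Finset.sum_le_sum fun j _ => mul_le_mul_of_nonneg_right (hentry j) (hξ j)
    _ = ∑ j, Vmat ν i j * ξ j
        + ∑ j, (∑ a, ∑ b, |D1 i a| * |E1 b j| * tvar (δ a b)) * ξ j := by
        rw [← Finset.sum_add_distrib]
        exact Finset.sum_congr rfl fun j _ => by ring
    _ ≤ ∑ j, Vmat ν i j * ξ j + matNorm D1 * mnorm δ * matNorm E1 * ‖ξ‖ := by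
        have h1 : ∑ j, (∑ a, ∑ b, |D1 i a| * |E1 b j| * tvar (δ a b)) * ξ j ≤
            ∑ j, (∑ a, ∑ b, |D1 i a| * |E1 b j| * tvar (δ a b)) * ‖ξ‖ :=
          Finset.sum_le_sum fun j _ =>
            mul_le_mul_of_nonneg_left (xi_le_norm ξ j) (hSnn j)
        have h2 : (∑ j, ∑ a, ∑ b, |D1 i a| * |E1 b j| * tvar (δ a b)) * ‖ξ‖ ≤
            matNorm D1 * mnorm δ * matNorm E1 * ‖ξ‖ :=
          mul_le_mul_of_nonneg_right (pert_row_bound D1 δ E1 i) (norm_nonneg ξ)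
        rw [Finset.sum_mul] at h2
        linarith

end mainproof
/-- Theorem 2 (lower bound): if the switched system `(A, ν)` is exponentially stable under
arbitrary switching and the cone `G = {ξ ≫ 0 : (M(A⁰_k)+V(ν_k))ξ ≪ 0 ∀k}` is nonempty, then
the structured stability radius w.r.t. the affine perturbations
`A⁰_k ↦ A⁰_k + D⁰_k Δ_k E⁰_k`, `ν_k ↦ ν_k + D¹_k δ_k E¹_k` is bounded below by
`(1/M₀) sup_{ξ ∈ G} β(ξ)/‖ξ‖`. -/
theorem stabRadius_lower_bound {N n : ℕ} (h : ℝ) (hh : 0 < h)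
    (A : Fin N → Matrix (Fin n) (Fin n) ℝ)
    (ν : Fin N → Fin n → Fin n → MeasureTheory.SignedMeasure (Set.Icc (-h) (0:ℝ)))
    (r q s p : Fin N → ℕ)
    (D0 : ∀ k, Matrix (Fin n) (Fin (r k)) ℝ) (E0 : ∀ k, Matrix (Fin (q k)) (Fin n) ℝ)
    (D1 : ∀ k, Matrix (Fin n) (Fin (s k)) ℝ) (E1 : ∀ k, Matrix (Fin (p k)) (Fin n) ℝ)
    (hstab : ExpStableSw h A ν)
    (G : Set (Fin n → ℝ))
    (hG : G = {ξ | (∀ i, 0 < ξ i) ∧ ∀ k, ∀ i, ((metz (A k) + Vmat (ν k)).mulVec ξ) i < 0})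
    (hGne : G.Nonempty)
    (β : (Fin n → ℝ) → ℝ)
    (hβ : ∀ ξ, β ξ = ⨅ k : Fin N, ⨅ i : Fin n, -(((metz (A k) + Vmat (ν k)).mulVec ξ) i))
    (M0 : ℝ)
    (hM0 : M0 = ⨆ k, max (matNorm (D0 k) * matNorm (E0 k)) (matNorm (D1 k) * matNorm (E1 k))) :
    ENNReal.ofReal ((1 / M0) * ⨆ ξ ∈ G, β ξ / ‖ξ‖) ≤
      sInf { rr : ℝ≥0∞ |
        ∃ (Δ : ∀ k, Matrix (Fin (r k)) (Fin (q k)) ℝ)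
          (δ : ∀ k, Fin (s k) → Fin (p k) → MeasureTheory.SignedMeasure (Set.Icc (-h) (0:ℝ))),
          ¬ ExpStableSw h (fun k => A k + D0 k * Δ k * E0 k)
              (fun k => pertKernel (ν k) (D1 k) (δ k) (E1 k)) ∧
          rr = ENNReal.ofReal (⨆ k, matNorm (Δ k) + mnorm (δ k)) } := by
  refine le_sInf ?_
  rintro rr ⟨Δ, δ, hunst, rfl⟩
  -- degenerate case N = 0
  rcases Nat.eq_zero_or_pos N with hN0 | hNpos
  · exfalso
    apply hunst
    subst hN0
    exact ⟨1, one_pos, 1, one_pos, fun σ _ => (σ 0).elim0⟩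
  -- degenerate case n = 0
  rcases Nat.eq_zero_or_pos n with hn0 | hnpos
  · exfalso
    apply hunst
    subst hn0
    refine ⟨1, one_pos, 1, one_pos, fun σ hσ φ x hsol t ht => ?_⟩
    haveI : IsEmpty (Fin 0) := Fin.isEmpty
    have hx : ‖x t‖ ≤ 0 := by
      refine (pi_norm_le_iff_of_nonneg le_rfl).2 fun i => i.elim0
    have : (0:ℝ) ≤ 1 * Real.exp (-1 * t) * ‖φ‖ := by positivity
    linarith
  -- nonnegativity facts
  have hM0nn : 0 ≤ M0 := by
    rw [hM0]
    exact Real.iSup_nonneg fun k =>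
      le_trans (mul_nonneg (matNorm_nonneg _) (matNorm_nonneg _)) (le_max_left _ _)
  have hRnn : 0 ≤ ⨆ k, matNorm (Δ k) + mnorm (δ k) :=
    Real.iSup_nonneg fun k => add_nonneg (matNorm_nonneg _) (mnorm_nonneg _)
  apply ENNReal.ofReal_le_ofReal
  rcases eq_or_lt_of_le hM0nn with hM00 | hM0pos
  · rw [← hM00]
    simpa using hRnn
  -- main case : M0 > 0
  set R := ⨆ k, matNorm (Δ k) + mnorm (δ k) with hR_def
  have hsup_le : (⨆ ξ ∈ G, β ξ / ‖ξ‖) ≤ M0 * R := by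
    refine Real.iSup_le (fun ξ0 => ?_) (mul_nonneg hM0pos.le hRnn)
    refine Real.iSup_le (fun hmem => ?_) (mul_nonneg hM0pos.le hRnn)
    rw [hG] at hmem
    obtain ⟨hpos, _⟩ := hmem
    by_contra hcon
    push_neg at hcon
    have hξne : ξ0 ≠ 0 := by
      intro h0
      have := hpos ⟨0, hnpos⟩
      rw [h0] at this
      simp at this
    have hnormpos : 0 < ‖ξ0‖ := norm_pos_iff.2 hξne
    have hβξ : M0*R*‖ξ0‖ < β ξ0 := by
      have := (lt_div_iff₀ hnormpos).1 hcon
      linarith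
    set β₀ : ℝ := β ξ0 - M0*R*‖ξ0‖ with hβ₀_def
    have hβ₀pos : 0 < β₀ := by rw [hβ₀_def]; linarith
    refine absurd (core hh hnpos hNpos _ _ ξ0 hpos β₀ hβ₀pos ?_) hunst
    intro k i
    have hξnn : ∀ j, 0 ≤ ξ0 j := fun j => (hpos j).le
    have h1 := metz_pert_bound (A k) (D0 k * Δ k * E0 k) ξ0 hξnn i
    have h2 := Vmat_pert_bound (ν k) (D1 k) (δ k) (E1 k) ξ0 hξnn i
    have h3 : matNorm (D0 k * Δ k * E0 k) ≤ matNorm (D0 k) * matNorm (Δ k) * matNorm (E0 k) :=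
      (matNorm_mul_le _ _).trans
        (mul_le_mul_of_nonneg_right (matNorm_mul_le _ _) (matNorm_nonneg _))
    have h4 : matNorm (D0 k) * matNorm (E0 k) ≤ M0 := by
      rw [hM0]
      exact le_trans (le_max_left _ _)
        (le_ciSup (f := fun k => max (matNorm (D0 k) * matNorm (E0 k))
          (matNorm (D1 k) * matNorm (E1 k))) (Set.Finite.bddAbove (Set.finite_range _)) k)
    have h5 : matNorm (D1 k) * matNorm (E1 k) ≤ M0 := by
      rw [hM0]
      exact le_trans (le_max_right _ _)
        (le_ciSup (f := fun k => max (matNorm (D0 k) * matNorm (E0 k))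
          (matNorm (D1 k) * matNorm (E1 k))) (Set.Finite.bddAbove (Set.finite_range _)) k)
    have h6 : matNorm (Δ k) + mnorm (δ k) ≤ R := by
      rw [hR_def]
      exact le_ciSup (f := fun k => matNorm (Δ k) + mnorm (δ k))
        (Set.Finite.bddAbove (Set.finite_range _)) k
    have h7 : β ξ0 ≤ -(((metz (A k) + Vmat (ν k)).mulVec ξ0) i) := by
      rw [hβ ξ0]
      refine le_trans (ciInf_le (Set.Finite.bddBelow (Set.finite_range _)) k) ?_
      exact ciInf_le (Set.Finite.bddBelow (Set.finite_range _)) i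
    rw [Matrix.add_mulVec, Pi.add_apply] at h7
    have hnn := norm_nonneg ξ0
    have e1 : matNorm (D0 k * Δ k * E0 k) ≤ M0 * matNorm (Δ k) := by
      have := mul_le_mul_of_nonneg_right h4 (matNorm_nonneg (Δ k))
      nlinarith [h3]
    have e2 : matNorm (D1 k) * mnorm (δ k) * matNorm (E1 k) ≤ M0 * mnorm (δ k) := by
      have := mul_le_mul_of_nonneg_right h5 (mnorm_nonneg (δ k))
      nlinarith
    have e3 : M0 * (matNorm (Δ k) + mnorm (δ k)) ≤ M0 * R :=
      mul_le_mul_of_nonneg_left h6 hM0pos.le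
    have f1 : matNorm (D0 k * Δ k * E0 k) * ‖ξ0‖ ≤ M0 * matNorm (Δ k) * ‖ξ0‖ :=
      mul_le_mul_of_nonneg_right e1 hnn
    have f2 : matNorm (D1 k) * mnorm (δ k) * matNorm (E1 k) * ‖ξ0‖ ≤ M0 * mnorm (δ k) * ‖ξ0‖ :=
      mul_le_mul_of_nonneg_right e2 hnn
    have f3 : M0 * (matNorm (Δ k) + mnorm (δ k)) * ‖ξ0‖ ≤ M0 * R * ‖ξ0‖ :=
      mul_le_mul_of_nonneg_right e3 hnn
    rw [Matrix.add_mulVec, Pi.add_apply]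
    have hβ₀eq : -β₀ = -β ξ0 + M0*R*‖ξ0‖ := by rw [hβ₀_def]; ring
    rw [hβ₀eq]
    linarith [h1, h2, h7, f1, f2, f3]
  calc 1/M0 * (⨆ ξ ∈ G, β ξ / ‖ξ‖) ≤ 1/M0 * (M0 * R) :=
      mul_le_mul_of_nonneg_left hsup_le (by positivity)
    _ = R := by field_simp

end
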